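/- Let α ∈ (0,1]. Then the function F(t) = α(1 + t²) + (1 − α)·φ(t) on [0,∞), where φ(t) = √(2/π) ∫_t^∞ (x − t)² exp(−x²/2) dx, attains its minimum at a point ω* ≥ 0, and ω* is the unique nonnegative solution of the equation α·ω* = (1 − α)·√(2/π) ∫_{ω*}^∞ (x − ω*)·exp(−x²/2) dx. In particular, the minimizer depends only on α. -/

import Mathlib

open MeasureTheory ProbabilityTheory
open scoped Pointwise BigOperators

noncomputable section

/-- `phi t = sqrt(2/pi) * int_t^infty (x-t)^2 exp(-x^2/2) dx`. -/
def phi (t : ℝ) : ℝ :=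
  Real.sqrt (2 / Real.pi) * ∫ x in Set.Ioi t, (x - t) ^ 2 * Real.exp (-x ^ 2 / 2)

namespace OptW

open Real Set Filter Topology

/-- The standard gaussian kernel. -/
def ee (x : ℝ) : ℝ := Real.exp (-x ^ 2 / 2)

/-- Tail integral of the gaussian kernel. -/
def I0 (t : ℝ) : ℝ := ∫ x in Set.Ioi t, ee x

/-- The normalizing constant. -/
def cc : ℝ := Real.sqrt (2 / Real.pi)

lemma cc_pos : 0 < cc := Real.sqrt_pos.mpr (by positivity)

lemma ee_def : ee = fun x => Real.exp (-(1/2) * x ^ 2) := by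
  funext x; unfold ee; ring_nf

lemma ee_pos (x : ℝ) : 0 < ee x := Real.exp_pos _

lemma ee_le_one (x : ℝ) : ee x ≤ 1 := by
  unfold ee
  rw [Real.exp_le_one_iff]
  nlinarith [sq_nonneg x]

lemma cont_ee : Continuous ee := by
  unfold ee; fun_prop

lemma int_ee : Integrable ee := by
  rw [ee_def]; exact integrable_exp_neg_mul_sq (by norm_num)

lemma int_xe : Integrable (fun x => x * ee x) := by
  rw [ee_def]; exact integrable_mul_exp_neg_mul_sq (by norm_num)

lemma int_x2e : Integrable (fun x => x ^ 2 * ee x) := by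
  have h := integrable_rpow_mul_exp_neg_mul_sq (b := 1/2) (by norm_num) (s := 2) (by norm_num)
  rw [ee_def]
  have h2 : (fun x : ℝ => x ^ (2:ℝ) * Real.exp (-(1/2) * x ^ 2))
      = fun x : ℝ => x ^ 2 * Real.exp (-(1/2) * x ^ 2) := by
    funext x
    rw [show ((2:ℝ) = ((2:ℕ):ℝ)) by norm_num, Real.rpow_natCast]
  rwa [h2] at h

lemma I0_nonneg (t : ℝ) : 0 ≤ I0 t :=
  setIntegral_nonneg measurableSet_Ioi fun x _ => (ee_pos x).le

lemma hd_ee (x : ℝ) : HasDerivAt ee (-x * ee x) x := by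
  have h1 : HasDerivAt (fun y : ℝ => -y ^ 2 / 2) (-x) x := by
    have := ((hasDerivAt_pow 2 x).neg).div_const 2
    refine this.congr_deriv ?_
    push_cast
    ring
  have h2 := h1.exp
  unfold ee
  refine h2.congr_deriv ?_
  ring

lemma I0_eq (t : ℝ) : I0 t = I0 0 - ∫ x in (0:ℝ)..t, ee x := by
  have key : ∀ s : ℝ, (∫ x in Set.Iic s, ee x) + I0 s = ∫ x, ee x := fun s =>
    intervalIntegral.integral_Iic_add_Ioi int_ee.integrableOn int_ee.integrableOn
  have h := intervalIntegral.integral_Iic_sub_Iic (μ := volume) (f := ee)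
    int_ee.integrableOn int_ee.integrableOn (a := 0) (b := t)
  have k0 := key 0
  have kt := key t
  linarith

lemma hasDerivAt_I0 (t : ℝ) : HasDerivAt I0 (-(ee t)) t := by
  have h1 : HasDerivAt (fun u => ∫ x in (0:ℝ)..u, ee x) (ee t) t :=
    intervalIntegral.integral_hasDerivAt_right int_ee.intervalIntegrable
      cont_ee.aestronglyMeasurable.stronglyMeasurableAtFilter cont_ee.continuousAt
  have h2 := (hasDerivAt_const t (I0 0)).sub h1
  have hfun : I0 = fun u => I0 0 - ∫ x in (0:ℝ)..u, ee x := funext fun u => I0_eq u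
  rw [hfun]
  exact h2.congr_deriv (by ring)

lemma tendsto_ee : Tendsto ee atTop (𝓝 0) := by
  rw [ee_def]
  rw [Real.tendsto_exp_comp_nhds_zero]
  have h : Tendsto (fun x : ℝ => x ^ 2) atTop atTop := tendsto_pow_atTop two_ne_zero
  have h2 : Tendsto (fun x : ℝ => -(x ^ 2)) atTop atBot := tendsto_neg_atBot_iff.mpr h
  convert h2.atBot_div_const (by norm_num : (0:ℝ) < 2) using 1
  funext x; ring

lemma tendsto_xe : Tendsto (fun x => x * ee x) atTop (𝓝 0) := by
  have hg : Tendsto (fun x : ℝ => Real.exp (-(1/2) * x)) atTop (𝓝 (0:ℝ)) := by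
    rw [Real.tendsto_exp_comp_nhds_zero]
    have h1 : Tendsto (fun x : ℝ => x / 2) atTop atTop :=
      tendsto_id.atTop_div_const (by norm_num)
    have h3 := tendsto_neg_atBot_iff.mpr h1
    convert h3 using 1
    funext x; ring
  have h := (rpow_mul_exp_neg_mul_sq_isLittleO_exp_neg (by norm_num : (0:ℝ) < 1/2)
    1).tendsto_zero_of_tendsto hg
  have h2 : (fun x : ℝ => x ^ (1:ℝ) * Real.exp (-(1/2) * x ^ 2)) = fun x => x * ee x := by
    funext x; rw [Real.rpow_one, ee_def]
  rwa [h2] at h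

lemma xe_Ioi (t : ℝ) : ∫ x in Set.Ioi t, x * ee x = ee t := by
  have h := integral_Ioi_of_hasDerivAt_of_tendsto' (f := fun x => -(ee x))
    (f' := fun x => x * ee x) (a := t) (m := 0)
    (fun x _ => by exact (hd_ee x).neg.congr_deriv (by ring)) int_xe.integrableOn
    (by simpa using tendsto_ee.neg)
  simpa using h

lemma hd_negxe (x : ℝ) : HasDerivAt (fun y => -(y * ee y)) (x ^ 2 * ee x - ee x) x := by
  have := ((hasDerivAt_id x).mul (hd_ee x)).neg
  refine this.congr_deriv ?_
  simp only [id_eq]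
  ring

lemma x2e_Ioi (t : ℝ) : ∫ x in Set.Ioi t, x ^ 2 * ee x = t * ee t + I0 t := by
  have hint : Integrable (fun x => x ^ 2 * ee x - ee x) := int_x2e.sub int_ee
  have h := integral_Ioi_of_hasDerivAt_of_tendsto' (f := fun x => -(x * ee x))
    (f' := fun x => x ^ 2 * ee x - ee x) (a := t) (m := 0)
    (fun x _ => hd_negxe x) hint.integrableOn
    (by simpa using tendsto_xe.neg)
  rw [integral_sub (f := fun x => x ^ 2 * ee x) (g := ee)
    int_x2e.integrableOn int_ee.integrableOn] at h
  have h2 : I0 t = ∫ x in Set.Ioi t, ee x := rfl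
  simp only [zero_sub, neg_neg] at h
  rw [h2]
  linarith [h]

lemma phi_eq (t : ℝ) : phi t = cc * ((1 + t ^ 2) * I0 t - t * ee t) := by
  unfold phi cc
  congr 1
  have hsplit : ∀ x : ℝ, (x - t) ^ 2 * Real.exp (-x ^ 2 / 2)
      = (x ^ 2 * ee x - (2 * t) * (x * ee x)) + t ^ 2 * ee x := fun x => by
    unfold ee; ring
  rw [show (fun x => (x - t) ^ 2 * Real.exp (-x ^ 2 / 2)) =
    (fun x => (x ^ 2 * ee x - (2 * t) * (x * ee x)) + t ^ 2 * ee x) from funext hsplit]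
  have hi1 : Integrable (fun x => x ^ 2 * ee x - 2 * t * (x * ee x))
      (volume.restrict (Set.Ioi t)) := by
    exact (int_x2e.sub (int_xe.const_mul (2 * t))).integrableOn
  have hi2 : Integrable (fun x => t ^ 2 * ee x) (volume.restrict (Set.Ioi t)) := by
    exact (int_ee.const_mul (t ^ 2)).integrableOn
  rw [integral_add (f := fun x => x ^ 2 * ee x - 2 * t * (x * ee x))
      (g := fun x => t ^ 2 * ee x) hi1 hi2,
    integral_sub (f := fun x => x ^ 2 * ee x) (g := fun x => 2 * t * (x * ee x))
      int_x2e.integrableOn (int_xe.const_mul (2 * t)).integrableOn,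
    integral_const_mul, integral_const_mul, xe_Ioi, x2e_Ioi]
  have : I0 t = ∫ x in Set.Ioi t, ee x := rfl
  rw [← this]
  ring

lemma xte_Ioi (t : ℝ) : ∫ x in Set.Ioi t, (x - t) * Real.exp (-x ^ 2 / 2)
    = ee t - t * I0 t := by
  have hsplit : ∀ x : ℝ, (x - t) * Real.exp (-x ^ 2 / 2) = x * ee x - t * ee x := fun x => by
    unfold ee; ring
  rw [show (fun x => (x - t) * Real.exp (-x ^ 2 / 2)) =
    (fun x => x * ee x - t * ee x) from funext hsplit]
  rw [integral_sub (f := fun x => x * ee x) (g := fun x => t * ee x)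
    int_xe.integrableOn (int_ee.const_mul t).integrableOn,
    integral_const_mul, xe_Ioi]
  rfl

/-- The function to be minimized. -/
def Fn (α t : ℝ) : ℝ := α * (1 + t ^ 2) + (1 - α) * cc * ((1 + t ^ 2) * I0 t - t * ee t)

/-- Half the derivative of `Fn α`. -/
def G (α t : ℝ) : ℝ := α * t + (1 - α) * cc * (t * I0 t - ee t)

lemma Fn_eq (α t : ℝ) : α * (1 + t ^ 2) + (1 - α) * phi t = Fn α t := by
  rw [phi_eq]; unfold Fn; ring

lemma hasDerivAt_Fn (α t : ℝ) : HasDerivAt (Fn α) (2 * G α t) t := by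
  have h1 : HasDerivAt (fun u : ℝ => 1 + u ^ 2) (2 * t) t := by
    exact ((hasDerivAt_const t (1:ℝ)).add (hasDerivAt_pow 2 t)).congr_deriv (by norm_num)
  have h2 := ((h1.mul (hasDerivAt_I0 t)).sub ((hasDerivAt_id t).mul (hd_ee t))).const_mul
    ((1 - α) * cc)
  have h3 := (h1.const_mul α).add h2
  have : Fn α = fun u => α * (1 + u ^ 2)
      + (1 - α) * cc * ((1 + u ^ 2) * I0 u - u * ee u) := rfl
  rw [this]
  refine h3.congr_deriv ?_
  unfold G
  simp only [id_eq]
  ring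

lemma hasDerivAt_G (α t : ℝ) : HasDerivAt (G α) (α + (1 - α) * cc * I0 t) t := by
  have h2 := (((hasDerivAt_id t).mul (hasDerivAt_I0 t)).sub (hd_ee t)).const_mul
    ((1 - α) * cc)
  have h3 := ((hasDerivAt_id t).const_mul α).add h2
  have : G α = fun u => α * u + (1 - α) * cc * (u * I0 u - ee u) := rfl
  rw [this]
  refine h3.congr_deriv ?_
  simp only [id_eq]
  ring

lemma G_strictMono (α : ℝ) (h₀ : 0 < α) (h₁ : α ≤ 1) : StrictMono (G α) := by
  apply strictMono_of_deriv_pos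
  intro t
  rw [(hasDerivAt_G α t).deriv]
  have : 0 ≤ (1 - α) * cc * I0 t := by
    apply mul_nonneg (mul_nonneg (by linarith) cc_pos.le) (I0_nonneg t)
  linarith

end OptW

theorem optimal_weight_characterization (α : ℝ) (h₀ : 0 < α) (h₁ : α ≤ 1) :
    ∃ ω : ℝ, 0 ≤ ω ∧
      (∀ t, 0 ≤ t →
        α * (1 + ω ^ 2) + (1 - α) * phi ω ≤ α * (1 + t ^ 2) + (1 - α) * phi t) ∧
      (∀ t, 0 ≤ t →
        (α * t = (1 - α) * Real.sqrt (2 / Real.pi) *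
            ∫ x in Set.Ioi t, (x - t) * Real.exp (-x ^ 2 / 2) ↔ t = ω)) := by
  classical
  open OptW in
  -- set up
  obtain ⟨ω, hωmem, hGω⟩ : ∃ ω ∈ Set.Icc (0:ℝ) (((1 - α) * OptW.cc + 1) / α),
      OptW.G α ω = 0 := by
    set T : ℝ := ((1 - α) * OptW.cc + 1) / α with hT
    have hT0 : 0 ≤ T := by
      apply div_nonneg _ h₀.le
      have := OptW.cc_pos
      nlinarith
    have hG0 : OptW.G α 0 ≤ 0 := by
      unfold OptW.G
      have : OptW.ee 0 = 1 := by unfold OptW.ee; norm_num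
      rw [this]
      have := OptW.cc_pos
      nlinarith
    have hGT : 0 ≤ OptW.G α T := by
      unfold OptW.G
      have hαT : α * T = (1 - α) * OptW.cc + 1 := by
        rw [hT]; field_simp
      have h1 : 0 ≤ T * OptW.I0 T := mul_nonneg hT0 (OptW.I0_nonneg T)
      have h2 : OptW.ee T ≤ 1 := OptW.ee_le_one T
      have h3 : 0 ≤ (1 - α) * OptW.cc := mul_nonneg (by linarith) OptW.cc_pos.le
      nlinarith
    have hcont : ContinuousOn (OptW.G α) (Set.Icc 0 T) :=
      (continuous_iff_continuousAt.mpr fun t =>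
        (OptW.hasDerivAt_G α t).differentiableAt.continuousAt).continuousOn
    have h := intermediate_value_Icc hT0 hcont
    have : (0:ℝ) ∈ Set.Icc (OptW.G α 0) (OptW.G α T) := ⟨hG0, hGT⟩
    obtain ⟨ω, hmem, hval⟩ := h this
    exact ⟨ω, hmem, hval⟩
  have hsm := OptW.G_strictMono α h₀ h₁
  have hω0 : 0 ≤ ω := hωmem.1
  refine ⟨ω, hω0, ?_, ?_⟩
  · -- minimality
    intro t ht
    rw [OptW.Fn_eq, OptW.Fn_eq]
    have hderiv : ∀ u : ℝ, deriv (OptW.Fn α) u = 2 * OptW.G α u := fun u =>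
      (OptW.hasDerivAt_Fn α u).deriv
    have hcont : Continuous (OptW.Fn α) := continuous_iff_continuousAt.mpr fun u =>
      (OptW.hasDerivAt_Fn α u).differentiableAt.continuousAt
    have hdiff : Differentiable ℝ (OptW.Fn α) := fun u =>
      (OptW.hasDerivAt_Fn α u).differentiableAt
    rcases le_total t ω with h | h
    · have hanti : AntitoneOn (OptW.Fn α) (Set.Iic ω) := by
        apply antitoneOn_of_deriv_nonpos (convex_Iic ω) hcont.continuousOn
          (hdiff.differentiableOn)
        intro x hx
        rw [interior_Iic] at hx
        rw [hderiv]
        have : OptW.G α x < OptW.G α ω := hsm hx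
        rw [hGω] at this
        linarith
      exact hanti h (Set.mem_Iic.mpr le_rfl) h
    · have hmono : MonotoneOn (OptW.Fn α) (Set.Ici ω) := by
        apply monotoneOn_of_deriv_nonneg (convex_Ici ω) hcont.continuousOn
          (hdiff.differentiableOn)
        intro x hx
        rw [interior_Ici] at hx
        rw [hderiv]
        have : OptW.G α ω < OptW.G α x := hsm hx
        rw [hGω] at this
        linarith
      exact hmono (Set.mem_Ici.mpr le_rfl) h h
  · -- characterization
    intro t _
    rw [OptW.xte_Ioi]
    have key : α * t = (1 - α) * Real.sqrt (2 / Real.pi) * (OptW.ee t - t * OptW.I0 t)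
        ↔ OptW.G α t = 0 := by
      unfold OptW.G OptW.cc
      constructor
      · intro h; linarith [h]
      · intro h; linarith [h]
    rw [key]
    constructor
    · intro h
      exact hsm.injective (h.trans hGω.symm)
    · intro h; rw [h, hGω]

end
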